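/- Let n ≥ 1, let B be an n×n real matrix, let ν ∈ ℝⁿ be a unit vector, and let a, b ∈ ℝⁿ. Set A(t) = det(I + tB)·(I + tB)⁻¹(I + tB)⁻ᵀ, ω(t) = det(I + tB)·‖(I + tB)⁻ᵀ ν‖, and S = B + Bᵀ. Then the function g(t) = ⟨A(t)a, ν⟩ · ⟨A(t)b, ν⟩ / ω(t), defined for t near 0, is differentiable at t = 0 with derivative g'(0) = [ (trace B)⟨a,ν⟩ − ⟨Sa, ν⟩ ]·⟨b,ν⟩ + [ (trace B)⟨b,ν⟩ − ⟨Sb, ν⟩ ]·⟨a,ν⟩ − ⟨a,ν⟩⟨b,ν⟩·( trace B − ⟨Bν, ν⟩ ). -/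

import Mathlib

open Matrix Polynomial

attribute [local instance] Matrix.linftyOpNormedAddCommGroup Matrix.linftyOpNormedSpace
  Matrix.linftyOpNormedRing Matrix.linftyOpNormedAlgebra

variable {n : ℕ}

noncomputable def innerCLM (a ν : EuclideanSpace ℝ (Fin n)) :
    Matrix (Fin n) (Fin n) ℝ →L[ℝ] ℝ :=
  LinearMap.toContinuousLinearMap
  { toFun := fun M => (inner ℝ (Matrix.toEuclideanLin M a) ν : ℝ)
    map_add' := by intro M N; simp [map_add, inner_add_left]
    map_smul' := by intro c M; simp [_root_.map_smul, inner_smul_left] }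

@[simp] lemma innerCLM_apply (a ν : EuclideanSpace ℝ (Fin n)) (M : Matrix (Fin n) (Fin n) ℝ) :
    innerCLM a ν M = (inner ℝ (Matrix.toEuclideanLin M a) ν : ℝ) := rfl

noncomputable def applyCLM (ν : EuclideanSpace ℝ (Fin n)) :
    Matrix (Fin n) (Fin n) ℝ →L[ℝ] EuclideanSpace ℝ (Fin n) :=
  LinearMap.toContinuousLinearMap
  { toFun := fun M => Matrix.toEuclideanLin M ν
    map_add' := by intro M N; simp [map_add]
    map_smul' := by intro c M; simp [_root_.map_smul] }

@[simp] lemma applyCLM_apply (ν : EuclideanSpace ℝ (Fin n)) (M : Matrix (Fin n) (Fin n) ℝ) :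
    applyCLM ν M = Matrix.toEuclideanLin M ν := rfl

noncomputable def transCLM : Matrix (Fin n) (Fin n) ℝ →L[ℝ] Matrix (Fin n) (Fin n) ℝ :=
  LinearMap.toContinuousLinearMap
  { toFun := fun M => Mᵀ
    map_add' := by intro M N; simp
    map_smul' := by intro c M; simp }

@[simp] lemma transCLM_apply (M : Matrix (Fin n) (Fin n) ℝ) : transCLM M = Mᵀ := rfl

lemma inner_transpose (A : Matrix (Fin n) (Fin n) ℝ) (x y : EuclideanSpace ℝ (Fin n)) :
    (inner ℝ (Matrix.toEuclideanLin Aᵀ x) y : ℝ) = inner ℝ x (Matrix.toEuclideanLin A y) := by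
  have h : Aᵀ = Aᴴ := by ext i j; simp [Matrix.conjTranspose_apply]
  rw [h, Matrix.toEuclideanLin_conjTranspose_eq_adjoint, LinearMap.adjoint_inner_left]

lemma toEuclideanLin_one' : Matrix.toEuclideanLin (1 : Matrix (Fin n) (Fin n) ℝ) = LinearMap.id := by
  ext x
  simp [Matrix.toEuclideanLin_apply]

variable (B : Matrix (Fin n) (Fin n) ℝ)

lemma det_hasDerivAt : HasDerivAt (fun t : ℝ => (1 + t • B).det) B.trace 0 := by
  set q : ℝ[X] := (det (1 + (X : ℝ[X]) • B.map C)).divX.divX with hq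
  have key : (fun t : ℝ => (1 + t • B).det)
      = fun t : ℝ => 1 + B.trace * t + q.eval t * t ^ 2 := by
    funext t; rw [Matrix.det_one_add_smul]
  rw [key]
  have h1 : HasDerivAt (fun t : ℝ => 1 + B.trace * t) (B.trace * 1) 0 :=
    ((hasDerivAt_id (0:ℝ)).const_mul B.trace).const_add 1
  have h2 : HasDerivAt (fun t : ℝ => q.eval t * t ^ 2)
      (q.derivative.eval 0 * 0 ^ 2 + q.eval 0 * ((2:ℕ) * 0 ^ (2-1))) 0 :=
    (q.hasDerivAt 0).mul (hasDerivAt_pow 2 0)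
  exact (h1.add h2).congr_deriv (by simp)

lemma inv_hasDerivAt : HasDerivAt (fun t : ℝ => (1 + t • B)⁻¹) (-B) 0 := by
  have hc : HasDerivAt (fun t : ℝ => 1 + t • B) B 0 := by
    exact (((hasDerivAt_id (0:ℝ)).smul_const B).const_add 1).congr_deriv (by simp)
  have hring := hasFDerivAt_ringInverse (R := Matrix (Fin n) (Fin n) ℝ) (𝕜 := ℝ) 1
  rw [show ((1 : (Matrix (Fin n) (Fin n) ℝ)ˣ) : Matrix (Fin n) (Fin n) ℝ) = 1 + (0:ℝ) • B by simp]
    at hring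
  have hcomp := hring.comp_hasDerivAt 0 hc
  have : (fun t : ℝ => (1 + t • B)⁻¹) = fun t => Ring.inverse (1 + t • B) := by
    funext t; exact Matrix.nonsing_inv_eq_ringInverse _
  rw [this]
  exact hcomp.congr_deriv (by simp)

/-- Pointwise shape derivative of the ghost-penalty integrand: with
`A(t) = det(I + tB)(I + tB)⁻¹(I + tB)⁻ᵀ`, `ω(t) = det(I + tB)‖(I + tB)⁻ᵀ ν‖` and
`S = B + Bᵀ`, the function `g(t) = ⟨A(t)a, ν⟩⟨A(t)b, ν⟩/ω(t)` has derivative at `t = 0`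
`[(trace B)⟨a,ν⟩ − ⟨Sa,ν⟩]⟨b,ν⟩ + [(trace B)⟨b,ν⟩ − ⟨Sb,ν⟩]⟨a,ν⟩ − ⟨a,ν⟩⟨b,ν⟩(trace B − ⟨Bν,ν⟩)`
(Lemma 4.4 and the Appendix of the paper). -/
theorem ghost_penalty_integrand_hasDerivAt (n : ℕ) (hn : 1 ≤ n)
    (B : Matrix (Fin n) (Fin n) ℝ) (ν a b : EuclideanSpace ℝ (Fin n)) (hν : ‖ν‖ = 1) :
    HasDerivAt
      (fun t : ℝ =>
        let M : Matrix (Fin n) (Fin n) ℝ := 1 + t • B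
        let A : Matrix (Fin n) (Fin n) ℝ := M.det • (M⁻¹ * (M⁻¹)ᵀ)
        (inner ℝ (Matrix.toEuclideanLin A a) ν : ℝ) *
          (inner ℝ (Matrix.toEuclideanLin A b) ν : ℝ) /
          (M.det * ‖Matrix.toEuclideanLin ((M⁻¹)ᵀ) ν‖))
      (((B.trace * (inner ℝ a ν : ℝ) - (inner ℝ (Matrix.toEuclideanLin (B + Bᵀ) a) ν : ℝ)) *
          (inner ℝ b ν : ℝ)) +
        ((B.trace * (inner ℝ b ν : ℝ) - (inner ℝ (Matrix.toEuclideanLin (B + Bᵀ) b) ν : ℝ)) *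
          (inner ℝ a ν : ℝ)) -
        (inner ℝ a ν : ℝ) * (inner ℝ b ν : ℝ) *
          (B.trace - (inner ℝ (Matrix.toEuclideanLin B ν) ν : ℝ))) 0 := by
  have hdet := det_hasDerivAt B
  have hinv := inv_hasDerivAt B
  -- transpose of inverse
  have hTrans : HasDerivAt (fun t : ℝ => ((1 + t • B)⁻¹)ᵀ) (-Bᵀ) 0 := by
    have := (transCLM.hasFDerivAt).comp_hasDerivAt 0 hinv
    exact this.congr_deriv (Matrix.transpose_neg B)
  -- the matrix product
  have hmul : HasDerivAt (fun t : ℝ => (1 + t • B)⁻¹ * ((1 + t • B)⁻¹)ᵀ) (-B + -Bᵀ) 0 := by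
    have := hinv.mul hTrans
    exact this.congr_deriv (by simp)
  -- the scaled matrix A(t)
  have hA : HasDerivAt
      (fun t : ℝ => (1 + t • B).det • ((1 + t • B)⁻¹ * ((1 + t • B)⁻¹)ᵀ))
      (B.trace • 1 + (-B + -Bᵀ)) 0 := by
    have := hdet.smul hmul
    exact this.congr_deriv (by simp [add_comm])
  -- scalar functions f₁, f₂
  have hf₁ : HasDerivAt
      (fun t : ℝ => (inner ℝ (Matrix.toEuclideanLin
          ((1 + t • B).det • ((1 + t • B)⁻¹ * ((1 + t • B)⁻¹)ᵀ)) a) ν : ℝ))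
      ((innerCLM a ν) (B.trace • 1 + (-B + -Bᵀ))) 0 :=
    ((innerCLM a ν).hasFDerivAt).comp_hasDerivAt 0 hA
  have hf₂ : HasDerivAt
      (fun t : ℝ => (inner ℝ (Matrix.toEuclideanLin
          ((1 + t • B).det • ((1 + t • B)⁻¹ * ((1 + t • B)⁻¹)ᵀ)) b) ν : ℝ))
      ((innerCLM b ν) (B.trace • 1 + (-B + -Bᵀ))) 0 :=
    ((innerCLM b ν).hasFDerivAt).comp_hasDerivAt 0 hA
  -- the vector h(t) = (M⁻¹)ᵀ ν and its norm
  have hh : HasDerivAt (fun t : ℝ => Matrix.toEuclideanLin (((1 + t • B)⁻¹)ᵀ) ν)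
      (Matrix.toEuclideanLin (-Bᵀ) ν) 0 :=
    ((applyCLM ν).hasFDerivAt).comp_hasDerivAt 0 hTrans
  have hval : Matrix.toEuclideanLin (((1 + (0:ℝ) • B)⁻¹)ᵀ) ν = ν := by
    simp [toEuclideanLin_one']
  have hr : HasDerivAt
      (fun t : ℝ => (inner ℝ (Matrix.toEuclideanLin (((1 + t • B)⁻¹)ᵀ) ν)
          (Matrix.toEuclideanLin (((1 + t • B)⁻¹)ᵀ) ν) : ℝ))
      ((inner ℝ ν (Matrix.toEuclideanLin (-Bᵀ) ν) : ℝ) +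
        (inner ℝ (Matrix.toEuclideanLin (-Bᵀ) ν) ν : ℝ)) 0 := by
    have := HasDerivAt.inner (𝕜 := ℝ) hh hh
    rw [hval] at this
    exact this
  have hrval : (inner ℝ (Matrix.toEuclideanLin (((1 + (0:ℝ) • B)⁻¹)ᵀ) ν)
      (Matrix.toEuclideanLin (((1 + (0:ℝ) • B)⁻¹)ᵀ) ν) : ℝ) = 1 := by
    rw [hval, real_inner_self_eq_norm_sq, hν]; norm_num
  have hnrm : HasDerivAt (fun t : ℝ => ‖Matrix.toEuclideanLin (((1 + t • B)⁻¹)ᵀ) ν‖)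
      (((inner ℝ ν (Matrix.toEuclideanLin (-Bᵀ) ν) : ℝ) +
        (inner ℝ (Matrix.toEuclideanLin (-Bᵀ) ν) ν : ℝ)) * (1 / (2 * Real.sqrt 1))) 0 := by
    have hs := Real.hasDerivAt_sqrt (x := (inner ℝ (Matrix.toEuclideanLin (((1 + (0:ℝ) • B)⁻¹)ᵀ) ν)
      (Matrix.toEuclideanLin (((1 + (0:ℝ) • B)⁻¹)ᵀ) ν) : ℝ)) (by rw [hrval]; norm_num)
    have hcomp := hs.comp 0 hr
    rw [hrval] at hcomp
    have heq : (fun t : ℝ => ‖Matrix.toEuclideanLin (((1 + t • B)⁻¹)ᵀ) ν‖)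
        = (Real.sqrt ∘ fun t : ℝ => (inner ℝ (Matrix.toEuclideanLin (((1 + t • B)⁻¹)ᵀ) ν)
            (Matrix.toEuclideanLin (((1 + t • B)⁻¹)ᵀ) ν) : ℝ)) := by
      funext t
      simp only [Function.comp_apply, real_inner_self_eq_norm_sq]
      rw [Real.sqrt_sq (norm_nonneg _)]
    rw [heq]
    refine hcomp.congr_deriv ?_
    ring
  -- denominator ω(t)
  have hω := hdet.mul hnrm
  have hω0 : (1 + (0:ℝ) • B).det * ‖Matrix.toEuclideanLin (((1 + (0:ℝ) • B)⁻¹)ᵀ) ν‖ = 1 := by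
    rw [hval, hν]; simp
  have hg := (hf₁.mul hf₂).div hω (by simp only [Pi.mul_apply]; rw [hω0]; norm_num)
  refine hg.congr_deriv ?_
  simp only [Pi.mul_apply]
  have e1 : (inner ℝ (Matrix.toEuclideanLin
      ((1 + (0:ℝ) • B).det • ((1 + (0:ℝ) • B)⁻¹ * ((1 + (0:ℝ) • B)⁻¹)ᵀ)) a) ν : ℝ)
      = (inner ℝ a ν : ℝ) := by
    simp [toEuclideanLin_one']
  have e2 : (inner ℝ (Matrix.toEuclideanLin
      ((1 + (0:ℝ) • B).det • ((1 + (0:ℝ) • B)⁻¹ * ((1 + (0:ℝ) • B)⁻¹)ᵀ)) b) ν : ℝ)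
      = (inner ℝ b ν : ℝ) := by
    simp [toEuclideanLin_one']
  have e3 : ∀ c : EuclideanSpace ℝ (Fin n),
      (innerCLM c ν) (B.trace • 1 + (-B + -Bᵀ))
      = B.trace * (inner ℝ c ν : ℝ) - (inner ℝ (Matrix.toEuclideanLin (B + Bᵀ) c) ν : ℝ) := by
    intro c
    simp [map_add, _root_.map_smul, map_neg, inner_add_left, inner_smul_left, inner_neg_left,
      toEuclideanLin_one']
    ring
  have e4 : (inner ℝ ν (Matrix.toEuclideanLin (-Bᵀ) ν) : ℝ) +
      (inner ℝ (Matrix.toEuclideanLin (-Bᵀ) ν) ν : ℝ)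
      = -(2 * (inner ℝ (Matrix.toEuclideanLin B ν) ν : ℝ)) := by
    have h5 : (inner ℝ (Matrix.toEuclideanLin Bᵀ ν) ν : ℝ)
        = inner ℝ (Matrix.toEuclideanLin B ν) ν := by
      rw [inner_transpose, real_inner_comm]
    have h6 : (inner ℝ ν (Matrix.toEuclideanLin Bᵀ ν) : ℝ)
        = inner ℝ (Matrix.toEuclideanLin B ν) ν := by
      rw [real_inner_comm]; exact h5
    simp only [map_neg, LinearMap.neg_apply, inner_neg_left, inner_neg_right]
    rw [real_inner_comm ν, h6]
    ring
  have h00 : (1 + (0:ℝ) • B).det = 1 := by simp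
  rw [e1, e2, e3, e3, e4, hω0, hval, hν]
  simp only [Real.sqrt_one, h00]
  ring
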